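/- Let U be an open subset of a finite-dimensional real vector space E, g a smooth possibly degenerate metric on U, and D a Koszul derivative for g. Then the Riemann curvature tensor can be expressed in terms of the Koszul form as R(X,Y,Z,T) = X K(Y,Z,T) − Y K(X,Z,T) − K([X,Y],Z,T) + g(D_X Z, D_Y T) − g(D_Y Z, D_X T) for all smooth vector fields X, Y, Z, T; in particular, since g(D_X Z, D_Y T) and g(D_Y Z, D_X T) are determined by the Koszul form alone, R(X,Y,Z,T) is the same for every Koszul derivative D of g. -/

import Mathlib

variable {E : Type*} [NormedAddCommGroup E] [NormedSpace ℝ E] [FiniteDimensional ℝ E]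

/-- The action `(Xf)(p) = df_p(X(p))` of a vector field on a function. -/
noncomputable def vAct (X : E → E) (f : E → ℝ) : E → ℝ := fun p => fderiv ℝ f p (X p)

/-- The Lie bracket `[X,Y](p) = dY_p(X(p)) − dX_p(Y(p))` of vector fields. -/
noncomputable def vBracket (X Y : E → E) : E → E :=
  fun p => fderiv ℝ Y p (X p) - fderiv ℝ X p (Y p)

/-- The function `p ↦ g_p(Y(p), Z(p))`. -/
noncomputable def gFun (g : E → E →L[ℝ] E →L[ℝ] ℝ) (Y Z : E → E) : E → ℝ := fun p => g p (Y p) (Z p)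

/-- The Koszul form
`K(X,Y,Z) := ½{X g(Y,Z) + Y g(Z,X) − Z g(X,Y) − g(X,[Y,Z]) + g(Y,[Z,X]) + g(Z,[X,Y])}`. -/
noncomputable def koszul (g : E → E →L[ℝ] E →L[ℝ] ℝ) (X Y Z : E → E) : E → ℝ := fun p =>
  (1/2 : ℝ) * (vAct X (gFun g Y Z) p + vAct Y (gFun g Z X) p - vAct Z (gFun g X Y) p
    - gFun g X (vBracket Y Z) p + gFun g Y (vBracket Z X) p + gFun g Z (vBracket X Y) p)

/-- The Riemann curvature tensor of a Koszul derivative `D`: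
`R(X,Y,Z,T) := g(D_X D_Y Z − D_Y D_X Z − D_[X,Y] Z, T)`. -/
noncomputable def riem (g : E → E →L[ℝ] E →L[ℝ] ℝ) (D : (E → E) → (E → E) → (E → E))
    (X Y Z T : E → E) : E → ℝ := fun p =>
  g p (D X (D Y Z) p - D Y (D X Z) p - D (vBracket X Y) Z p) (T p)

/-- The bracket of smooth vector fields is smooth on an open set. -/
lemma contDiffOn_vBracket {U : Set E} (hU : IsOpen U) {X Y : E → E}
    (hX : ContDiffOn ℝ (⊤ : ℕ∞) X U) (hY : ContDiffOn ℝ (⊤ : ℕ∞) Y U) :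
    ContDiffOn ℝ (⊤ : ℕ∞) (vBracket X Y) U := by
  have hX' : ContDiffOn ℝ (⊤ : ℕ∞) (fun p => fderiv ℝ X p) U := hX.fderiv_of_isOpen hU (by simp)
  have hY' : ContDiffOn ℝ (⊤ : ℕ∞) (fun p => fderiv ℝ Y p) U := hY.fderiv_of_isOpen hU (by simp)
  exact (hY'.clm_apply hX).sub (hX'.clm_apply hY)

/-- The symmetrization identity `K(X,Y,Z) + K(X,Z,Y) = X g(Y,Z)` (pure algebra). -/
lemma koszul_add_symm (g : E → E →L[ℝ] E →L[ℝ] ℝ)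
    (hsymm : ∀ p : E, ∀ u v : E, g p u v = g p v u) (X Y Z : E → E) (p : E) :
    koszul g X Y Z p + koszul g X Z Y p = vAct X (gFun g Y Z) p := by
  have e1 : gFun g Z X = gFun g X Z := funext fun q => hsymm q _ _
  have e2 : gFun g Y X = gFun g X Y := funext fun q => hsymm q _ _
  have e3 : gFun g Z Y = gFun g Y Z := funext fun q => hsymm q _ _
  have b1 : vBracket Z Y p = -vBracket Y Z p := by simp [vBracket, neg_sub]
  have b2 : vBracket Y X p = -vBracket X Y p := by simp [vBracket, neg_sub]
  have b3 : vBracket X Z p = -vBracket Z X p := by simp [vBracket, neg_sub]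
  have g1 : gFun g X (vBracket Z Y) p = -(gFun g X (vBracket Y Z) p) := by
    simp [gFun, b1]
  have g2 : gFun g Z (vBracket Y X) p = -(gFun g Z (vBracket X Y) p) := by
    simp [gFun, b2]
  have g3 : gFun g Y (vBracket X Z) p = -(gFun g Y (vBracket Z X) p) := by
    simp [gFun, b3]
  simp only [koszul, e1, e2, e3]
  rw [g1, g2, g3]
  ring

/-- Metric compatibility of a Koszul derivative at a point of `U`. -/
lemma koszul_compat {U : Set E} (g : E → E →L[ℝ] E →L[ℝ] ℝ)
    (hsymm : ∀ p : E, ∀ u v : E, g p u v = g p v u)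
    (D : (E → E) → (E → E) → (E → E))
    (hDK : ∀ X Y Z : E → E, ContDiffOn ℝ (⊤ : ℕ∞) X U → ContDiffOn ℝ (⊤ : ℕ∞) Y U →
      ContDiffOn ℝ (⊤ : ℕ∞) Z U → ∀ p ∈ U, g p (D X Y p) (Z p) = koszul g X Y Z p)
    {X W T : E → E} (hX : ContDiffOn ℝ (⊤ : ℕ∞) X U) (hW : ContDiffOn ℝ (⊤ : ℕ∞) W U)
    (hT : ContDiffOn ℝ (⊤ : ℕ∞) T U) {p : E} (hp : p ∈ U) :
    g p (D X W p) (T p) + g p (W p) (D X T p) = vAct X (gFun g W T) p := by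
  rw [hDK X W T hX hW hT p hp, hsymm p (W p) (D X T p), hDK X T W hX hT hW p hp]
  exact koszul_add_symm g hsymm X W T p

/-- The Riemann curvature formula for one Koszul derivative. -/
lemma riem_formula_aux {U : Set E} (hU : IsOpen U) (g : E → E →L[ℝ] E →L[ℝ] ℝ)
    (hsymm : ∀ p : E, ∀ u v : E, g p u v = g p v u)
    (D : (E → E) → (E → E) → (E → E))
    (hDsmooth : ∀ X Y : E → E, ContDiffOn ℝ (⊤ : ℕ∞) X U → ContDiffOn ℝ (⊤ : ℕ∞) Y U →
      ContDiffOn ℝ (⊤ : ℕ∞) (D X Y) U)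
    (hDK : ∀ X Y Z : E → E, ContDiffOn ℝ (⊤ : ℕ∞) X U → ContDiffOn ℝ (⊤ : ℕ∞) Y U →
      ContDiffOn ℝ (⊤ : ℕ∞) Z U → ∀ p ∈ U, g p (D X Y p) (Z p) = koszul g X Y Z p)
    {X Y Z T : E → E} (hX : ContDiffOn ℝ (⊤ : ℕ∞) X U) (hY : ContDiffOn ℝ (⊤ : ℕ∞) Y U)
    (hZ : ContDiffOn ℝ (⊤ : ℕ∞) Z U) (hT : ContDiffOn ℝ (⊤ : ℕ∞) T U)
    {p : E} (hp : p ∈ U) :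
    riem g D X Y Z T p =
      vAct X (koszul g Y Z T) p - vAct Y (koszul g X Z T) p
        - koszul g (vBracket X Y) Z T p
        + g p (D X Z p) (D Y T p) - g p (D Y Z p) (D X T p) := by
  have hbr : ContDiffOn ℝ (⊤ : ℕ∞) (vBracket X Y) U := contDiffOn_vBracket hU hX hY
  have hDYZ := hDsmooth Y Z hY hZ
  have hDXZ := hDsmooth X Z hX hZ
  have c1 : vAct X (gFun g (D Y Z) T) p = vAct X (koszul g Y Z T) p := by
    have heq : gFun g (D Y Z) T =ᶠ[nhds p] koszul g Y Z T :=
      Filter.eventuallyEq_of_mem (hU.mem_nhds hp) (fun q hq => hDK Y Z T hY hZ hT q hq)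
    simp only [vAct, heq.fderiv_eq]
  have c2 : vAct Y (gFun g (D X Z) T) p = vAct Y (koszul g X Z T) p := by
    have heq : gFun g (D X Z) T =ᶠ[nhds p] koszul g X Z T :=
      Filter.eventuallyEq_of_mem (hU.mem_nhds hp) (fun q hq => hDK X Z T hX hZ hT q hq)
    simp only [vAct, heq.fderiv_eq]
  have t1 := koszul_compat g hsymm D hDK hX hDYZ hT hp
  have t2 := koszul_compat g hsymm D hDK hY hDXZ hT hp
  have t3 : g p (D (vBracket X Y) Z p) (T p) = koszul g (vBracket X Y) Z T p :=
    hDK _ Z T hbr hZ hT p hp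
  have hR : riem g D X Y Z T p =
      g p (D X (D Y Z) p) (T p) - g p (D Y (D X Z) p) (T p)
        - g p (D (vBracket X Y) Z p) (T p) := by
    simp [riem, map_sub]
  rw [hR, t3]
  rw [c1] at t1
  rw [c2] at t2
  linarith

/-- the Riemann curvature tensor is expressed via the Koszul form as
`R(X,Y,Z,T) = X K(Y,Z,T) − Y K(X,Z,T) − K([X,Y],Z,T) + g(D_X Z, D_Y T) − g(D_Y Z, D_X T)`,
and it is the same for every Koszul derivative `D'` of `g`. -/
theorem riem_koszul_formula
    (U : Set E) (hU : IsOpen U)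
    (g : E → E →L[ℝ] E →L[ℝ] ℝ) (hg : ContDiffOn ℝ (⊤ : ℕ∞) g U)
    (hsymm : ∀ p : E, ∀ u v : E, g p u v = g p v u)
    (D : (E → E) → (E → E) → (E → E))
    (hDsmooth : ∀ X Y : E → E, ContDiffOn ℝ (⊤ : ℕ∞) X U → ContDiffOn ℝ (⊤ : ℕ∞) Y U →
      ContDiffOn ℝ (⊤ : ℕ∞) (D X Y) U)
    (hDK : ∀ X Y Z : E → E, ContDiffOn ℝ (⊤ : ℕ∞) X U → ContDiffOn ℝ (⊤ : ℕ∞) Y U →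
      ContDiffOn ℝ (⊤ : ℕ∞) Z U → ∀ p ∈ U, g p (D X Y p) (Z p) = koszul g X Y Z p)
    (X Y Z T : E → E) (hX : ContDiffOn ℝ (⊤ : ℕ∞) X U) (hY : ContDiffOn ℝ (⊤ : ℕ∞) Y U)
    (hZ : ContDiffOn ℝ (⊤ : ℕ∞) Z U) (hT : ContDiffOn ℝ (⊤ : ℕ∞) T U)
    (D' : (E → E) → (E → E) → (E → E))
    (hD'smooth : ∀ X Y : E → E, ContDiffOn ℝ (⊤ : ℕ∞) X U → ContDiffOn ℝ (⊤ : ℕ∞) Y U →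
      ContDiffOn ℝ (⊤ : ℕ∞) (D' X Y) U)
    (hD'K : ∀ X Y Z : E → E, ContDiffOn ℝ (⊤ : ℕ∞) X U → ContDiffOn ℝ (⊤ : ℕ∞) Y U →
      ContDiffOn ℝ (⊤ : ℕ∞) Z U → ∀ p ∈ U, g p (D' X Y p) (Z p) = koszul g X Y Z p) :
    ∀ p ∈ U,
      riem g D X Y Z T p =
        vAct X (koszul g Y Z T) p - vAct Y (koszul g X Z T) p
          - koszul g (vBracket X Y) Z T p
          + g p (D X Z p) (D Y T p) - g p (D Y Z p) (D X T p) ∧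
      riem g D X Y Z T p = riem g D' X Y Z T p := by
  intro p hp
  have hDYT := hDsmooth Y T hY hT
  have hDXT := hDsmooth X T hX hT
  have hD'XZ := hD'smooth X Z hX hZ
  have hD'YZ := hD'smooth Y Z hY hZ
  have h1 := riem_formula_aux hU g hsymm D hDsmooth hDK hX hY hZ hT hp
  have h2 := riem_formula_aux hU g hsymm D' hD'smooth hD'K hX hY hZ hT hp
  have key1 : g p (D X Z p) (D Y T p) = g p (D' X Z p) (D' Y T p) := by
    have a1 : g p (D X Z p) (D Y T p) = g p (D' X Z p) (D Y T p) := by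
      rw [hDK X Z (D Y T) hX hZ hDYT p hp, hD'K X Z (D Y T) hX hZ hDYT p hp]
    have a2 : g p (D Y T p) (D' X Z p) = g p (D' Y T p) (D' X Z p) := by
      rw [hDK Y T (D' X Z) hY hT hD'XZ p hp, hD'K Y T (D' X Z) hY hT hD'XZ p hp]
    rw [a1, hsymm p (D' X Z p) (D Y T p), a2, hsymm p (D' Y T p) (D' X Z p)]
  have key2 : g p (D Y Z p) (D X T p) = g p (D' Y Z p) (D' X T p) := by
    have a1 : g p (D Y Z p) (D X T p) = g p (D' Y Z p) (D X T p) := by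
      rw [hDK Y Z (D X T) hY hZ hDXT p hp, hD'K Y Z (D X T) hY hZ hDXT p hp]
    have a2 : g p (D X T p) (D' Y Z p) = g p (D' X T p) (D' Y Z p) := by
      rw [hDK X T (D' Y Z) hX hT hD'YZ p hp, hD'K X T (D' Y Z) hX hT hD'YZ p hp]
    rw [a1, hsymm p (D' Y Z p) (D X T p), a2, hsymm p (D' X T p) (D' Y Z p)]
  refine ⟨h1, ?_⟩
  rw [h1, h2, key1, key2]
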